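/- The polynomial V(x,y) = 1 - 4a₁(x - y) + 4a₁²(x² - 2xy - y²) is an inverse integrating factor of the planar system ẋ = -y, ẏ = x - 2a₁x² + 4a₁xy + 2a₁y², and V(0,0) = 1 ≠ 0. -/

import Mathlib

noncomputable def P8 (a₁ x y : ℝ) : ℝ := -y
noncomputable def Q8 (a₁ x y : ℝ) : ℝ := x - 2*a₁*x^2 + 4*a₁*x*y + 2*a₁*y^2
noncomputable def V8 (a₁ x y : ℝ) : ℝ :=
  1 - 4*a₁*(x - y) + 4*a₁^2*(x^2 - 2*x*y - y^2)

/-- V is an inverse integrating factor and V(0,0) = 1 ≠ 0. -/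
theorem stmt_8 (a₁ : ℝ) :
    (∀ x y : ℝ,
      P8 a₁ x y * deriv (fun s => V8 a₁ s y) x
      + Q8 a₁ x y * deriv (fun s => V8 a₁ x s) y
      = (deriv (fun s => P8 a₁ s y) x + deriv (fun s => Q8 a₁ x s) y)
          * V8 a₁ x y)
    ∧ V8 a₁ 0 0 = 1 ∧ (1 : ℝ) ≠ 0 := by
  refine ⟨fun x y => ?_, by norm_num [V8], one_ne_zero⟩
  have hVx : deriv (fun s => V8 a₁ s y) x = -4*a₁ + 4*a₁^2*(2*x - 2*y) := by
    have : (fun s => V8 a₁ s y)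
        = fun s => 1 - 4*a₁*(s - y) + 4*a₁^2*(s^2 - 2*s*y - y^2) := rfl
    rw [this]
    have h : HasDerivAt (fun s : ℝ => 1 - 4*a₁*(s - y) + 4*a₁^2*(s^2 - 2*s*y - y^2))
        (-4*a₁ + 4*a₁^2*(2*x - 2*y)) x := by
      have h1 : HasDerivAt (fun s : ℝ => s) 1 x := hasDerivAt_id x
      have := (((h1.sub_const y).const_mul (4*a₁)).const_sub 1).add
        ((((h1.pow 2).sub ((h1.const_mul 2).mul_const y)).sub_const (y^2)).const_mul (4*a₁^2))
      exact (this.congr_of_eventuallyEq (Filter.Eventually.of_forall fun s => by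
        simp only [Pi.add_apply, Pi.sub_apply, Pi.pow_apply])).congr_deriv (by norm_num)
    exact h.deriv
  have hVy : deriv (fun s => V8 a₁ x s) y = 4*a₁ + 4*a₁^2*(-2*x - 2*y) := by
    have : (fun s => V8 a₁ x s)
        = fun s => 1 - 4*a₁*(x - s) + 4*a₁^2*(x^2 - 2*x*s - s^2) := rfl
    rw [this]
    have h1 : HasDerivAt (fun s : ℝ => s) 1 y := hasDerivAt_id y
    have h : HasDerivAt (fun s : ℝ => 1 - 4*a₁*(x - s) + 4*a₁^2*(x^2 - 2*x*s - s^2))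
        (4*a₁ + 4*a₁^2*(-2*x - 2*y)) y := by
      have := (((h1.const_sub x).const_mul (4*a₁)).const_sub 1).add
        ((((h1.const_mul (2*x)).const_sub (x^2)).sub (h1.pow 2)).const_mul (4*a₁^2))
      exact (this.congr_of_eventuallyEq (Filter.Eventually.of_forall fun s => by
        simp only [Pi.add_apply, Pi.sub_apply, Pi.pow_apply])).congr_deriv (by norm_num)
    exact h.deriv
  have hPx : deriv (fun s => P8 a₁ s y) x = 0 := by
    simp [P8]
  have hQy : deriv (fun s => Q8 a₁ x s) y = 4*a₁*x + 4*a₁*y := by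
    have : (fun s => Q8 a₁ x s)
        = fun s => x - 2*a₁*x^2 + 4*a₁*x*s + 2*a₁*s^2 := rfl
    rw [this]
    have h1 : HasDerivAt (fun s : ℝ => s) 1 y := hasDerivAt_id y
    have h : HasDerivAt (fun s : ℝ => x - 2*a₁*x^2 + 4*a₁*x*s + 2*a₁*s^2)
        (4*a₁*x + 4*a₁*y) y := by
      have := ((h1.const_mul (4*a₁*x)).const_add (x - 2*a₁*x^2)).add
        ((h1.pow 2).const_mul (2*a₁))
      exact (this.congr_of_eventuallyEq (Filter.Eventually.of_forall fun s => by
        simp only [Pi.add_apply, Pi.sub_apply, Pi.pow_apply])).congr_deriv (by norm_num; ring)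
    exact h.deriv
  rw [hVx, hVy, hPx, hQy]
  simp only [P8, Q8, V8]
  ring
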